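/- Error due to regularization on inputs in the range of the covariance (Lemma B.5, finite-dimensional form): Let Σ_x ∈ ℝ^{d_x×d_x} be symmetric positive semidefinite, let W ∈ ℝ^{d_y×d_x}, set Σ_yx = W Σ_x and, for λ > 0, W_λ = Σ_yx (Σ_x + λI)^{−1}. Then for any x of the form x = Σ_x^{1/2} v with ‖v‖ ≤ C, one has ‖(W_λ − W) x‖ ≤ (1/2)·√λ·‖W‖_F·C, where ‖W‖_F is the Frobenius (Hilbert–Schmidt) norm of W. -/

import Mathlib

open scoped Matrix.Norms.L2Operator

section OldSqrt

open scoped ComplexOrder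

/-- The square root of a positive semidefinite matrix, as `Matrix.PosSemidef.sqrt` was defined
in the older Mathlib (removed since). -/
noncomputable def Matrix.PosSemidef.sqrt {n 𝕜 : Type*} [Fintype n] [DecidableEq n] [RCLike 𝕜]
    {A : Matrix n n 𝕜} (hA : A.PosSemidef) : Matrix n n 𝕜 :=
  hA.1.eigenvectorUnitary.1 * Matrix.diagonal ((↑) ∘ Real.sqrt ∘ hA.1.eigenvalues) *
    (star hA.1.eigenvectorUnitary : Matrix n n 𝕜)

end OldSqrt

/-- The Frobenius (Hilbert–Schmidt) norm of a real matrix. -/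
noncomputable def frobNorm {m n : Type*} [Fintype m] [Fintype n]
    (A : Matrix m n ℝ) : ℝ :=
  Real.sqrt (∑ i, ∑ j, A i j ^ 2)

open Matrix

lemma psd_smul {n : Type*} [Fintype n] {M : Matrix n n ℝ} (hM : M.PosSemidef)
    {c : ℝ} (hc : 0 ≤ c) : (c • M).PosSemidef := by
  exact hM.smul hc

lemma oldsqrt_mul_self {d : ℕ} {S : Matrix (Fin d) (Fin d) ℝ} (hS : S.PosSemidef) :
    hS.sqrt * hS.sqrt = S := by
  have hU : (star hS.1.eigenvectorUnitary : Matrix (Fin d) (Fin d) ℝ) *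
      hS.1.eigenvectorUnitary = 1 := Unitary.coe_star_mul_self _
  have key : ∀ U V D E : Matrix (Fin d) (Fin d) ℝ, V * U = 1 →
      U * D * V * (U * E * V) = U * (D * E) * V := by
    intro U V D E h
    simp only [Matrix.mul_assoc]
    rw [← Matrix.mul_assoc V U, h, Matrix.one_mul]
  unfold Matrix.PosSemidef.sqrt
  rw [key _ _ _ _ hU, diagonal_mul_diagonal]
  conv_rhs => rw [hS.1.spectral_theorem, Unitary.conjStarAlgAut_apply]
  congr 2
  congr 1
  funext i
  simp [Real.mul_self_sqrt (hS.eigenvalues_nonneg i)]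

lemma oldsqrt_herm {d : ℕ} {S : Matrix (Fin d) (Fin d) ℝ} (hS : S.PosSemidef) :
    hS.sqrtᴴ = hS.sqrt := by
  unfold Matrix.PosSemidef.sqrt
  simp [conjTranspose_mul, Matrix.mul_assoc, Matrix.star_eq_conjTranspose,
    conjTranspose_eq_transpose_of_trivial]

lemma dot_self_mulVec {k l : Type*} [Fintype k] [Fintype l]
    (B : Matrix k l ℝ) (u : l → ℝ) :
    (B *ᵥ u) ⬝ᵥ (B *ᵥ u) = u ⬝ᵥ ((Bᵀ * B) *ᵥ u) := by
  rw [← mulVec_mulVec]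
  conv_rhs => rw [dotProduct_mulVec, vecMul_transpose]

lemma ridge_core {d : ℕ} {S : Matrix (Fin d) (Fin d) ℝ} (hS : S.PosSemidef)
    {lam : ℝ} (hlam : 0 < lam) (u : Fin d → ℝ) :
    (((lam • ((S + lam • 1)⁻¹ * hS.sqrt)) *ᵥ u) ⬝ᵥ ((lam • ((S + lam • 1)⁻¹ * hS.sqrt)) *ᵥ u))
      ≤ (lam / 4) * (u ⬝ᵥ u) := by
  set A := S + lam • (1 : Matrix (Fin d) (Fin d) ℝ) with hAdef
  set R := hS.sqrt with hRdef
  set P := A⁻¹ with hPdef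
  have hA : A.PosDef := by
    refine Matrix.PosDef.posSemidef_add hS ?_
    rw [smul_one_eq_diagonal]
    exact Matrix.PosDef.diagonal (fun _ => hlam)
  have hdet : IsUnit A.det := (isUnit_iff_isUnit_det A).mp hA.isUnit
  have hPA : P * A = 1 := nonsing_inv_mul A hdet
  have hAP : A * P = 1 := mul_nonsing_inv A hdet
  have hRR : R * R = S := oldsqrt_mul_self hS
  have hSR : S * R = R * S := by rw [← hRR, mul_assoc]
  have hAR : A * R = R * A := by
    rw [hAdef, add_mul, mul_add, hSR, smul_mul_assoc, mul_smul_comm, one_mul, mul_one]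
  have hAS : A * S = S * A := by
    rw [hAdef, add_mul, mul_add, smul_mul_assoc, mul_smul_comm, one_mul, mul_one]
  have hPR : P * R = R * P := by
    calc P * R = P * R * (A * P) := by rw [hAP, mul_one]
      _ = P * (R * A) * P := by rw [mul_assoc, mul_assoc, mul_assoc]
      _ = P * (A * R) * P := by rw [hAR]
      _ = (P * A) * (R * P) := by rw [mul_assoc, mul_assoc, mul_assoc]
      _ = R * P := by rw [hPA, one_mul]
  have hPS : P * S = S * P := by
    calc P * S = P * S * (A * P) := by rw [hAP, mul_one]
      _ = P * (S * A) * P := by rw [mul_assoc, mul_assoc, mul_assoc]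
      _ = P * (A * S) * P := by rw [hAS]
      _ = (P * A) * (S * P) := by rw [mul_assoc, mul_assoc, mul_assoc]
      _ = S * P := by rw [hPA, one_mul]
  have hPH : Pᴴ = P := (hA.posSemidef.inv).1
  have hRH : Rᴴ = R := oldsqrt_herm hS
  have hPPR : R * (P * P) = P * P * R := by
    rw [← mul_assoc, ← hPR, mul_assoc, ← hPR, ← mul_assoc]
  -- key algebraic identity
  have hsq : (S - lam • 1) * (S - lam • 1) = A * A - (4 * lam) • S := by
    rw [hAdef]
    simp only [mul_sub, sub_mul, mul_add, add_mul, smul_mul_assoc, mul_smul_comm,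
      one_mul, mul_one, smul_smul]
    module
  have hNpsd : ((lam / 4) • ((S - lam • 1) * (S - lam • 1))).PosSemidef := by
    apply psd_smul _ (by positivity)
    have h1 : (S - lam • 1).IsHermitian := by
      apply hS.1.sub
      unfold Matrix.IsHermitian
      rw [conjTranspose_smul, conjTranspose_one]
      simp
    have := posSemidef_conjTranspose_mul_self (S - lam • 1)
    rwa [h1.eq] at this
  have h2 : P * S * P = P * P * S := by
    rw [mul_assoc, ← hPS, ← mul_assoc]
  have hMid : (lam / 4) • (1 : Matrix (Fin d) (Fin d) ℝ) - (lam ^ 2) • (P * P * S)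
      = P * ((lam / 4) • ((S - lam • 1) * (S - lam • 1))) * Pᴴ := by
    rw [hPH, hsq]
    have h1 : P * ((lam / 4) • (A * A - (4 * lam) • S)) * P
        = (lam / 4) • (P * A * (A * P)) - (lam / 4 * (4 * lam)) • (P * S * P) := by
      rw [smul_sub, mul_sub, sub_mul, smul_smul]
      simp only [mul_smul_comm, smul_mul_assoc, mul_assoc]
    rw [h1, hAP, hPA, mul_one, h2]
    have hsc : lam / 4 * (4 * lam) = lam ^ 2 := by ring
    rw [hsc]
  have hMpsd : ((lam / 4) • (1 : Matrix (Fin d) (Fin d) ℝ)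
      - (lam ^ 2) • (P * P * S)).PosSemidef := by
    rw [hMid]
    exact hNpsd.mul_mul_conjTranspose_same P
  have hineq := hMpsd.dotProduct_mulVec_nonneg u
  rw [star_trivial] at hineq
  have hexp : u ⬝ᵥ (((lam / 4) • (1 : Matrix (Fin d) (Fin d) ℝ)
      - (lam ^ 2) • (P * P * S)) *ᵥ u)
      = lam / 4 * (u ⬝ᵥ u) - lam ^ 2 * (u ⬝ᵥ ((P * P * S) *ᵥ u)) := by
    rw [sub_mulVec, smul_mulVec, smul_mulVec, one_mulVec,
      dotProduct_sub, dotProduct_smul, dotProduct_smul]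
    simp [smul_eq_mul]
  rw [hexp] at hineq
  have hBB : (P * R)ᵀ * (P * R) = P * P * S := by
    have hT : (P * R)ᵀ = R * P := by
      have h3 : (P * R)ᴴ = R * P := by rw [conjTranspose_mul, hPH, hRH]
      rw [← h3]; rfl
    rw [hT]
    calc R * P * (P * R) = R * (P * P) * R := by
          rw [mul_assoc, mul_assoc, ← mul_assoc P P R, mul_assoc]
      _ = P * P * R * R := by rw [hPPR]
      _ = P * P * (R * R) := by rw [mul_assoc]
      _ = P * P * S := by rw [hRR]
  have hLHS : ((lam • (P * R)) *ᵥ u) ⬝ᵥ ((lam • (P * R)) *ᵥ u)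
      = lam ^ 2 * (u ⬝ᵥ ((P * P * S) *ᵥ u)) := by
    rw [smul_mulVec, dotProduct_smul, smul_dotProduct, dot_self_mulVec, hBB,
      smul_eq_mul, smul_eq_mul]
    ring
  rw [hLHS]
  linarith

lemma frob_mulVec_bound {m n : Type*} [Fintype m] [Fintype n]
    (A : Matrix m n ℝ) (u : n → ℝ) :
    Real.sqrt ((A *ᵥ u) ⬝ᵥ (A *ᵥ u)) ≤ frobNorm A * Real.sqrt (u ⬝ᵥ u) := by
  rw [frobNorm, ← Real.sqrt_mul (by positivity)]
  apply Real.sqrt_le_sqrt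
  rw [Finset.sum_mul]
  simp only [dotProduct, mulVec, dotProduct]
  apply Finset.sum_le_sum
  intro i _
  calc (∑ j, A i j * u j) * (∑ j, A i j * u j)
      = (∑ j, A i j * u j) ^ 2 := (sq _).symm
    _ ≤ (∑ j, A i j ^ 2) * ∑ j, u j ^ 2 :=
        Finset.sum_mul_sq_le_sq_mul_sq _ _ _
    _ = (∑ j, A i j ^ 2) * ∑ j, u j * u j := by simp [sq]

lemma euclid_norm_eq_sqrt_dot {k : ℕ} (w : EuclideanSpace ℝ (Fin k)) :
    ‖w‖ = Real.sqrt ((WithLp.equiv 2 _ w) ⬝ᵥ (WithLp.equiv 2 _ w)) := by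
  rw [EuclideanSpace.norm_eq]
  congr 1
  simp [dotProduct, Real.norm_eq_abs, sq_abs, sq]

lemma norm_toEuclideanLin_eq {k l : ℕ} (M : Matrix (Fin k) (Fin l) ℝ)
    (w : EuclideanSpace ℝ (Fin l)) :
    ‖Matrix.toEuclideanLin M w‖
      = Real.sqrt ((M *ᵥ (WithLp.equiv 2 _ w)) ⬝ᵥ (M *ᵥ (WithLp.equiv 2 _ w))) := by
  rw [euclid_norm_eq_sqrt_dot]
  congr 2


/-- **Error due to regularization on inputs in the range of the covariance** (Lemma B.5,
finite-dimensional form). With `Σ_yx = W Σ_x` and `W_λ = Σ_yx (Σ_x + λI)⁻¹`, for any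
`x = Σ_x^{1/2} v` with `‖v‖ ≤ C` we have `‖(W_λ − W)x‖ ≤ (1/2)·√λ·‖W‖_F·C`. -/
theorem ridge_error_regularization {dx dy : ℕ}
    (Sx : Matrix (Fin dx) (Fin dx) ℝ) (hSx : Sx.PosSemidef)
    (W : Matrix (Fin dy) (Fin dx) ℝ) (lam : ℝ) (hlam : 0 < lam)
    (Wlam : Matrix (Fin dy) (Fin dx) ℝ) (hWlam : Wlam = W * Sx * (Sx + lam • 1)⁻¹)
    (C : ℝ) (v : EuclideanSpace ℝ (Fin dx)) (hv : ‖v‖ ≤ C)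
    (x : EuclideanSpace ℝ (Fin dx)) (hx : x = Matrix.toEuclideanLin hSx.sqrt v) :
    ‖Matrix.toEuclideanLin (Wlam - W) x‖ ≤ 1 / 2 * Real.sqrt lam * frobNorm W * C := by
  classical
    have hC : (0:ℝ) ≤ C := le_trans (norm_nonneg v) hv
  set A := Sx + lam • (1 : Matrix (Fin dx) (Fin dx) ℝ) with hAdef
  have hA : A.PosDef := Matrix.PosDef.posSemidef_add hSx
    (by rw [Matrix.smul_one_eq_diagonal]; exact Matrix.PosDef.diagonal fun _ => hlam)
  have hdet : IsUnit A.det := (Matrix.isUnit_iff_isUnit_det A).mp hA.isUnit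
  have hAP : A * A⁻¹ = 1 := Matrix.mul_nonsing_inv A hdet
  set R := hSx.sqrt with hRdef
  -- matrix identity
  have hT : (Wlam - W) * R = -(W * (lam • (A⁻¹ * R))) := by
    have h1 : Wlam - W = (-lam) • (W * A⁻¹) := by
      rw [hWlam]
      calc W * Sx * A⁻¹ - W = W * Sx * A⁻¹ - W * (A * A⁻¹) := by
            rw [hAP, Matrix.mul_one]
        _ = W * (Sx * A⁻¹) - W * (A * A⁻¹) := by rw [Matrix.mul_assoc]
        _ = W * ((Sx - A) * A⁻¹) := by rw [Matrix.sub_mul, Matrix.mul_sub]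
        _ = W * (((-lam) • (1 : Matrix (Fin dx) (Fin dx) ℝ)) * A⁻¹) := by
            rw [hAdef]
            congr 2
            simp [sub_add_eq_sub_sub, neg_smul]
        _ = (-lam) • (W * A⁻¹) := by
            rw [Matrix.smul_mul, Matrix.one_mul, Matrix.mul_smul]
    rw [h1, Matrix.smul_mul, Matrix.mul_assoc, neg_smul, Matrix.mul_smul]
  set u : Fin dx → ℝ := WithLp.equiv 2 _ v with hudef
  have hxu : (WithLp.equiv 2 _ x) = R *ᵥ u := by
    rw [hx]; rfl
  set Bl := lam • (A⁻¹ * R) with hBldef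
  have hcore : ((Bl *ᵥ u) ⬝ᵥ (Bl *ᵥ u)) ≤ (lam / 4) * (u ⬝ᵥ u) := by
    rw [hBldef]
    exact ridge_core hSx hlam u
  have hnorm : ‖Matrix.toEuclideanLin (Wlam - W) x‖
      = Real.sqrt ((W *ᵥ (Bl *ᵥ u)) ⬝ᵥ (W *ᵥ (Bl *ᵥ u))) := by
    rw [norm_toEuclideanLin_eq, hxu, Matrix.mulVec_mulVec, hT, Matrix.neg_mulVec,
      dotProduct_neg, neg_dotProduct, neg_neg, ← Matrix.mulVec_mulVec]
  have hquarter : Real.sqrt (lam / 4 * (u ⬝ᵥ u)) = Real.sqrt lam / 2 * ‖v‖ := by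
    rw [euclid_norm_eq_sqrt_dot, ← hudef, Real.sqrt_mul (by positivity)]
    congr 1
    rw [Real.sqrt_div hlam.le, show (4:ℝ) = 2 ^ 2 by norm_num,
      Real.sqrt_sq (by norm_num : (0:ℝ) ≤ 2)]
  calc ‖Matrix.toEuclideanLin (Wlam - W) x‖
      ≤ frobNorm W * Real.sqrt ((Bl *ᵥ u) ⬝ᵥ (Bl *ᵥ u)) := by
        rw [hnorm]; exact frob_mulVec_bound W (Bl *ᵥ u)
    _ ≤ frobNorm W * Real.sqrt (lam / 4 * (u ⬝ᵥ u)) := by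
        apply mul_le_mul_of_nonneg_left (Real.sqrt_le_sqrt hcore)
        exact Real.sqrt_nonneg _
    _ = frobNorm W * (Real.sqrt lam / 2 * ‖v‖) := by rw [hquarter]
    _ ≤ frobNorm W * (Real.sqrt lam / 2 * C) := by
        apply mul_le_mul_of_nonneg_left _ (Real.sqrt_nonneg _)
        exact mul_le_mul_of_nonneg_left hv (by positivity)
    _ = 1 / 2 * Real.sqrt lam * frobNorm W * C := by ring
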